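/- Let C be a class of graphs. C is intersectionwise χ-imposing (that is, for every class B of graphs, the class of intersections {G ∩ H : G ∈ C, H ∈ B, V(G) = V(H)} is χ-bounded) if and only if there exists an integer k such that every graph in C has chromatic number at most k. -/

import Mathlib

open SimpleGraph

/-- A class of finite simple graphs, given by a predicate on graphs on `Fin n` for each `n`. -/
def GraphClass : Type :=
  ∀ n : ℕ, SimpleGraph (Fin n) → Prop

/-- A class is hereditary if it is closed under isomorphism and induced subgraphs,
i.e. closed under taking images of induced embeddings. -/
def GraphClass.Hereditary (C : GraphClass) : Prop :=
  ∀ (n m : ℕ) (G : SimpleGraph (Fin n)) (H : SimpleGraph (Fin m)), C n G →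
    (∃ f : Fin m ↪ Fin n, ∀ u v : Fin m, H.Adj u v ↔ G.Adj (f u) (f v)) → C m H

/-- A class of graphs is χ-bounded if there is a nondecreasing function `f` with
`χ(G) ≤ f(ω(G))` for every graph `G` in the class. -/
def GraphClass.ChiBounded (C : GraphClass) : Prop :=
  ∃ f : ℕ → ℕ, Monotone f ∧
    ∀ (n : ℕ) (G : SimpleGraph (Fin n)), C n G → G.chromaticNumber ≤ (f G.cliqueNum : ℕ∞)

/-- The graph-intersection of two classes: all graphs of the form `G ⊓ H` with `G` in the
first class and `H` in the second, on a common vertex set. -/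
def GraphClass.inter (C B : GraphClass) : GraphClass :=
  fun n K => ∃ G H : SimpleGraph (Fin n), C n G ∧ B n H ∧ K = G ⊓ H

section ChiAux

open Finset


/-- The shift graph on ordered pairs from `Fin n`. -/
def shiftG (n : ℕ) : SimpleGraph (Fin n × Fin n) where
  Adj p q := p ≠ q ∧ p.1 < p.2 ∧ q.1 < q.2 ∧ (p.2 = q.1 ∨ q.2 = p.1)
  symm := by
    constructor
    rintro p q ⟨h1, h2, h3, h4⟩
    exact ⟨h1.symm, h3, h2, h4.symm⟩
  loopless := by constructor; rintro p ⟨h1, _⟩; exact h1 rfl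

lemma shiftG_cliqueFree (n : ℕ) : (shiftG n).CliqueFree 3 := by
  intro s hs
  rw [is3Clique_iff] at hs
  obtain ⟨a, b, c, hab, hac, hbc, rfl⟩ := hs
  obtain ⟨-, ha, hb, d1⟩ := hab
  obtain ⟨-, -, hcc, d2⟩ := hac
  obtain ⟨-, -, -, d3⟩ := hbc
  simp only [Fin.ext_iff, Fin.lt_def] at ha hb hcc d1 d2 d3
  omega

lemma shiftG_not_colorable {n c : ℕ} (h : 2 ^ c < n) : ¬ (shiftG n).Colorable c := by
  rintro ⟨Co⟩
  set g : Fin n → Finset (Fin c) :=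
    fun i => (Finset.univ.filter (fun j => i < j)).image (fun j => Co (i, j)) with hg
  have key : ∀ i i' : Fin n, i < i' → g i ≠ g i' := by
    intro i i' hlt hgeq
    have h1 : Co (i, i') ∈ g i := by
      simp only [hg, Finset.mem_image, Finset.mem_filter, Finset.mem_univ, true_and]
      exact ⟨i', hlt, rfl⟩
    rw [hgeq] at h1
    simp only [hg, Finset.mem_image, Finset.mem_filter, Finset.mem_univ, true_and] at h1
    obtain ⟨j, hj, hcol⟩ := h1
    have hadj : (shiftG n).Adj (i, i') (i', j) := by
      refine ⟨fun he => absurd (congrArg Prod.fst he) (ne_of_lt hlt), hlt, hj, Or.inl rfl⟩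
    exact Co.valid hadj hcol.symm
  have hcard : Fintype.card (Finset (Fin c)) < Fintype.card (Fin n) := by
    simpa [Fintype.card_finset] using h
  obtain ⟨i, i', hne, heq⟩ := Fintype.exists_ne_map_eq_of_card_lt g hcard
  rcases lt_or_gt_of_ne hne with hlt | hlt
  · exact key i i' hlt heq
  · exact key i' i hlt heq.symm


section aux

/-- Shift graph transported to `Fin (n * n)`. -/
noncomputable def shiftF (n : ℕ) : SimpleGraph (Fin (n * n)) :=
  (SimpleGraph.comap (finProdFinEquiv.symm : Fin (n*n) ≃ Fin n × Fin n).toEmbedding (shiftG n))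

noncomputable def shiftF_iso (n : ℕ) : shiftF n ≃g shiftG n :=
  SimpleGraph.Iso.comap _ _

lemma shiftF_cliqueFree (n : ℕ) : (shiftF n).CliqueFree 3 :=
  (shiftG_cliqueFree n).comap (shiftF_iso n).toEmbedding.isContained

lemma shiftF_not_colorable {n c : ℕ} (h : 2 ^ c < n) : ¬ (shiftF n).Colorable c :=
  fun hc => shiftG_not_colorable h (hc.of_hom (shiftF_iso n).symm.toEmbedding.toHom)

lemma cliqueNum_le_two_of_cliqueFree {V : Type*} [Fintype V] {G : SimpleGraph V}
    (h : G.CliqueFree 3) : G.cliqueNum ≤ 2 := by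
  by_contra h'
  push_neg at h'
  obtain ⟨s, hs⟩ := G.exists_isNClique_cliqueNum
  exact (h.mono (by omega : 3 ≤ G.cliqueNum)) s hs

end aux


/-- If `G` has clique number at least `m`, then the complete graph on `m` vertices
induced-embeds into `G`. -/
lemma exists_top_embedding {n m : ℕ} {G : SimpleGraph (Fin n)} (h : m ≤ G.cliqueNum) :
    ∃ f : Fin m ↪ Fin n, ∀ u v : Fin m,
      (⊤ : SimpleGraph (Fin m)).Adj u v ↔ G.Adj (f u) (f v) := by
  obtain ⟨s, hs⟩ := G.exists_isNClique_cliqueNum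
  have hm : m ≤ s.card := by rw [hs.2]; exact h
  let f0 : Fin m → Fin n := fun i => (s.equivFin.symm (Fin.castLE hm i) : Fin n)
  have hmem : ∀ i, f0 i ∈ s := fun i => (s.equivFin.symm (Fin.castLE hm i)).2
  have hinj : Function.Injective f0 := by
    intro a b hab
    have := s.equivFin.symm.injective (Subtype.ext hab)
    exact Fin.castLE_injective hm this
  refine ⟨⟨f0, hinj⟩, fun u v => ?_⟩
  simp only [top_adj, Function.Embedding.coeFn_mk]
  constructor
  · intro huv
    exact hs.1 (hmem u) (hmem v) (fun he => huv (hinj he))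
  · intro hadj
    intro he
    exact hadj.ne (congrArg f0 he)


end ChiAux

/-- A hereditary class `C` is intersectionwise χ-imposing (its graph-intersection with
every class of graphs is χ-bounded) iff `C` is colorable, i.e. there is a uniform bound
on the chromatic numbers of its members. -/
theorem chi_imposing_iff_colorable (C : GraphClass) (hC : C.Hereditary) :
    (∀ B : GraphClass, (C.inter B).ChiBounded) ↔
      ∃ k : ℕ, ∀ (n : ℕ) (G : SimpleGraph (Fin n)), C n G → G.chromaticNumber ≤ (k : ℕ∞) := by
  constructor
  · intro h
    obtain ⟨f, hf, hb⟩ := h (fun _ _ => True)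
    by_cases hw : ∃ w : ℕ, ∀ (n : ℕ) (G : SimpleGraph (Fin n)), C n G → G.cliqueNum ≤ w
    · obtain ⟨w, hwb⟩ := hw
      refine ⟨f w, fun n G hG => ?_⟩
      refine le_trans (hb n G ⟨G, G, hG, trivial, (inf_idem G).symm⟩) ?_
      exact_mod_cast hf (hwb n G hG)
    · exfalso
      push_neg at hw
      set c := f 2 with hc
      set N := 2 ^ c + 1 with hN
      -- C contains the complete graph on N*N vertices
      obtain ⟨n, G, hG, hlt⟩ := hw (N * N)
      have htop : C (N * N) ⊤ :=
        hC n (N * N) G ⊤ hG (exists_top_embedding (le_of_lt hlt))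
      -- hence the shift graph is in the intersection class
      have hmem : (C.inter (fun _ _ => True)) (N * N) (shiftF N) :=
        ⟨⊤, shiftF N, htop, trivial, (top_inf_eq (shiftF N)).symm⟩
      have hχ : (shiftF N).chromaticNumber ≤ (f (shiftF N).cliqueNum : ℕ∞) :=
        hb _ _ hmem
      have hω : f (shiftF N).cliqueNum ≤ c :=
        hf (cliqueNum_le_two_of_cliqueFree (shiftF_cliqueFree N))
      have hcol : (shiftF N).Colorable c := by
        rw [← chromaticNumber_le_iff_colorable]
        exact le_trans hχ (by exact_mod_cast hω)
      exact shiftF_not_colorable (by omega) hcol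
  · rintro ⟨k, hk⟩ B
    refine ⟨fun _ => k, monotone_const, ?_⟩
    rintro n K ⟨G, H, hG, _, rfl⟩
    exact le_trans (SimpleGraph.chromaticNumber_mono _ inf_le_left) (hk n G hG)
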